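/- Let f ∈ ℝ[w,w⁻¹] with |f(w)| ≤ 1 for all w on the unit circle, and A(w) := 1 - f(w)f(1/w). Then A(w) ≥ 0 (is real and nonnegative) for all w ∈ U(1), and every root of w^{2l}A(w) lying on the unit circle has even multiplicity. -/

import Mathlib

open Complex Polynomial Filter Topology

/-- Evaluation of a real-coefficient Laurent polynomial at a complex number. -/
noncomputable def levalR (c : ℤ →₀ ℝ) (w : ℂ) : ℂ :=
  ∑ k ∈ c.support, (c k : ℂ) * w ^ k

lemma levalR_inv_conj (c : ℤ →₀ ℝ) (w : ℂ) (hw : ‖w‖ = 1) :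
    levalR c w⁻¹ = (starRingEnd ℂ) (levalR c w) := by
  have h1 : w * (starRingEnd ℂ) w = 1 := by
    rw [Complex.mul_conj]
    norm_cast
    rw [Complex.normSq_eq_norm_sq, hw]; norm_num
  have hinv : w⁻¹ = (starRingEnd ℂ) w := inv_eq_of_mul_eq_one_right h1
  rw [hinv]
  unfold levalR
  rw [map_sum]
  refine Finset.sum_congr rfl fun k _ => ?_
  rw [map_mul, Complex.conj_ofReal, map_zpow₀]

lemma levalR_part1 (c : ℤ →₀ ℝ)
    (hbound : ∀ w : ℂ, ‖w‖ = 1 → ‖levalR c w‖ ≤ 1) :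
    ∀ w : ℂ, ‖w‖ = 1 →
      (1 - levalR c w * levalR c w⁻¹).im = 0 ∧
      0 ≤ (1 - levalR c w * levalR c w⁻¹).re := by
  intro w hw
  rw [levalR_inv_conj c w hw, Complex.mul_conj]
  constructor
  · simp
  · have h := hbound w hw
    have h2 : Complex.normSq (levalR c w) ≤ 1 := by
      rw [Complex.normSq_eq_norm_sq]
      nlinarith [norm_nonneg (levalR c w)]
    simp [Complex.sub_re]
    linarith

theorem laurent_A_nonneg_and_even_mult (c : ℤ →₀ ℝ) (l : ℕ)
    (hdeg : ∀ k ∈ c.support, |k| ≤ (l : ℤ))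
    (hbound : ∀ w : ℂ, ‖w‖ = 1 → ‖levalR c w‖ ≤ 1)
    (p : Polynomial ℂ) (hp : p ≠ 0)
    (hpe : ∀ w : ℂ, w ≠ 0 → p.eval w = w ^ (2 * l) * (1 - levalR c w * levalR c w⁻¹)) :
    (∀ w : ℂ, ‖w‖ = 1 →
        (1 - levalR c w * levalR c w⁻¹).im = 0 ∧
        0 ≤ (1 - levalR c w * levalR c w⁻¹).re) ∧
    ∀ s : ℂ, ‖s‖ = 1 → Even (p.rootMultiplicity s) := by
  have part1 := levalR_part1 c hbound
  refine ⟨part1, ?_⟩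
  intro s hs
  rcases Nat.even_or_odd (p.rootMultiplicity s) with he | ho
  · exact he
  exfalso
  set m := p.rootMultiplicity s with hm
  have hs0 : s ≠ 0 := by intro h; simp [h] at hs
  set q : Polynomial ℂ := p /ₘ (X - C s) ^ m with hq
  have hfac : (X - C s) ^ m * q = p := Polynomial.pow_mul_divByMonic_rootMultiplicity_eq p s
  have hqs : q.eval s ≠ 0 := Polynomial.eval_divByMonic_pow_rootMultiplicity_ne_zero s hp
  -- the circle path
  set w : ℝ → ℂ := fun t => s * Complex.exp (Complex.I * t) with hwdef
  have hwnorm : ∀ t : ℝ, ‖w t‖ = 1 := by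
    intro t
    rw [hwdef]
    simp only [norm_mul, hs, one_mul, Complex.norm_exp]
    simp
  have hw0ne : ∀ t : ℝ, w t ≠ 0 := by
    intro t h
    have := hwnorm t
    rw [h] at this
    simp at this
  have hw0 : w 0 = s := by simp [hwdef]
  have hcw : Continuous w := by
    apply Continuous.mul continuous_const
    exact Complex.continuous_exp.comp (continuous_const.mul Complex.continuous_ofReal)
  -- G and H
  set G : ℝ → ℂ := fun t => 1 - levalR c (w t) * levalR c (w t)⁻¹ with hGdef
  set H : ℝ → ℂ := fun t => G t * ((t : ℂ) ^ m)⁻¹ with hHdef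
  have hGkey : ∀ t : ℝ, (w t) ^ (2 * l) * G t = (w t - s) ^ m * q.eval (w t) := by
    intro t
    have := hpe (w t) (hw0ne t)
    rw [← hfac] at this
    simp only [Polynomial.eval_mul, Polynomial.eval_pow, Polynomial.eval_sub,
      Polynomial.eval_X, Polynomial.eval_C] at this
    rw [← this]
  -- the limit L
  set L : ℂ := (s * Complex.I) ^ m * q.eval s * ((s ^ (2 * l))⁻¹) with hLdef
  have hL0 : L ≠ 0 := by
    apply mul_ne_zero (mul_ne_zero _ hqs)
    · exact inv_ne_zero (pow_ne_zero _ hs0)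
    · exact pow_ne_zero _ (mul_ne_zero hs0 Complex.I_ne_zero)
  -- the core slope limit
  have hd : HasDerivAt (fun t : ℝ => Complex.exp (Complex.I * t)) Complex.I 0 := by
    have h1 : HasDerivAt (fun t : ℝ => (Complex.I * (t : ℂ))) Complex.I 0 := by
      simpa using (Complex.ofRealCLM.hasDerivAt (x := (0:ℝ))).const_mul Complex.I
    simpa using h1.cexp
  have Tcore : Tendsto (fun t : ℝ => (t : ℝ)⁻¹ • (Complex.exp (Complex.I * t) - 1))
      (𝓝[≠] (0:ℝ)) (𝓝 Complex.I) := by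
    have h2 := hasDerivAt_iff_tendsto_slope.mp hd
    refine h2.congr fun t => ?_
    rw [slope_def_module]
    simp [Complex.exp_zero]
  have T1 : Tendsto (fun t : ℝ => (s * ((t : ℝ)⁻¹ • (Complex.exp (Complex.I * t) - 1))) ^ m)
      (𝓝[≠] (0:ℝ)) (𝓝 ((s * Complex.I) ^ m)) :=
    (Tcore.const_mul s).pow m
  have T2 : Tendsto (fun t : ℝ => q.eval (w t)) (𝓝[≠] (0:ℝ)) (𝓝 (q.eval s)) := by
    have : Tendsto (fun t : ℝ => q.eval (w t)) (𝓝 (0:ℝ)) (𝓝 (q.eval (w 0))) :=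
      ((q.continuous).comp hcw).tendsto 0
    rw [hw0] at this
    exact this.mono_left nhdsWithin_le_nhds
  have T3 : Tendsto (fun t : ℝ => ((w t) ^ (2 * l))⁻¹) (𝓝[≠] (0:ℝ)) (𝓝 ((s ^ (2 * l))⁻¹)) := by
    have h1 : Tendsto (fun t : ℝ => (w t) ^ (2 * l)) (𝓝 (0:ℝ)) (𝓝 ((w 0) ^ (2 * l))) :=
      ((hcw.pow _)).tendsto 0
    rw [hw0] at h1
    exact (h1.mono_left nhdsWithin_le_nhds).inv₀ (pow_ne_zero _ hs0)
  have heq : ∀ᶠ t in 𝓝[≠] (0:ℝ),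
      ((fun t : ℝ => (s * ((t : ℝ)⁻¹ • (Complex.exp (Complex.I * t) - 1))) ^ m
        * q.eval (w t) * ((w t) ^ (2 * l))⁻¹)) t = H t := by
    filter_upwards [self_mem_nhdsWithin] with t ht
    have ht0 : (t : ℂ) ≠ 0 := by exact_mod_cast ht
    have hW : (w t) ^ (2 * l) ≠ 0 := pow_ne_zero _ (hw0ne t)
    have hkey := hGkey t
    have hws : w t - s = s * (Complex.exp (Complex.I * t) - 1) := by
      simp [hwdef]; ring
    rw [hws] at hkey
    have hG : G t = (s * (Complex.exp (Complex.I * t) - 1)) ^ m * q.eval (w t)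
        * ((w t) ^ (2 * l))⁻¹ := by
      rw [eq_mul_inv_iff_mul_eq₀ hW]
      linear_combination hkey
    simp only [hHdef, Complex.real_smul, Complex.ofReal_inv]
    rw [hG, show s * ((t:ℂ)⁻¹ * (Complex.exp (Complex.I * t) - 1))
      = (t:ℂ)⁻¹ * (s * (Complex.exp (Complex.I * t) - 1)) by ring, mul_pow]
    ring
  have TH : Tendsto H (𝓝[≠] (0:ℝ)) (𝓝 L) := by
    have := ((T1.mul T2).mul T3).congr' heq
    exact this
  -- real and imaginary part facts about H
  have hHre : ∀ t : ℝ, (H t).re = (G t).re * ((t ^ m)⁻¹ : ℝ) := by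
    intro t
    simp only [hHdef]
    rw [show ((t : ℂ) ^ m)⁻¹ = (((t ^ m)⁻¹ : ℝ) : ℂ) by push_cast; ring,
      Complex.mul_re, Complex.ofReal_re, Complex.ofReal_im]
    ring
  have hHim : ∀ t : ℝ, (H t).im = (G t).im * ((t ^ m)⁻¹ : ℝ) := by
    intro t
    simp only [hHdef]
    rw [show ((t : ℂ) ^ m)⁻¹ = (((t ^ m)⁻¹ : ℝ) : ℂ) by push_cast; ring,
      Complex.mul_im, Complex.ofReal_re, Complex.ofReal_im]
    ring
  have hGre : ∀ t : ℝ, 0 ≤ (G t).re := fun t => (part1 (w t) (hwnorm t)).2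
  have hGim : ∀ t : ℝ, (G t).im = 0 := fun t => (part1 (w t) (hwnorm t)).1
  -- imaginary part of L is zero
  have THim : Tendsto (fun t => (H t).im) (𝓝[≠] (0:ℝ)) (𝓝 L.im) :=
    (Complex.continuous_im.tendsto L).comp TH
  have hLim : L.im = 0 := by
    have h0 : Tendsto (fun t : ℝ => (H t).im) (𝓝[≠] (0:ℝ)) (𝓝 0) := by
      have : (fun t : ℝ => (H t).im) = fun t => 0 := by
        funext t; rw [hHim, hGim]; ring
      rw [this]
      exact tendsto_const_nhds
    exact tendsto_nhds_unique THim h0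
  -- real part of L
  have THre : Tendsto (fun t => (H t).re) (𝓝[≠] (0:ℝ)) (𝓝 L.re) :=
    (Complex.continuous_re.tendsto L).comp TH
  have hsubR : 𝓝[>] (0:ℝ) ≤ 𝓝[≠] (0:ℝ) :=
    nhdsWithin_mono 0 (fun x hx => ne_of_gt hx)
  have hsubL : 𝓝[<] (0:ℝ) ≤ 𝓝[≠] (0:ℝ) :=
    nhdsWithin_mono 0 (fun x hx => ne_of_lt hx)
  have hge : 0 ≤ L.re := by
    refine ge_of_tendsto (THre.mono_left hsubR) ?_
    filter_upwards [self_mem_nhdsWithin] with t ht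
    rw [hHre]
    have h1 : (0:ℝ) < t ^ m := pow_pos ht m
    exact mul_nonneg (hGre t) (by positivity)
  have hle : L.re ≤ 0 := by
    refine le_of_tendsto (THre.mono_left hsubL) ?_
    filter_upwards [self_mem_nhdsWithin] with t ht
    rw [hHre]
    have ht' : t < 0 := ht
    have h1 : t ^ m < 0 := Odd.pow_neg ho ht'
    have h2 : (t ^ m)⁻¹ ≤ 0 := le_of_lt (inv_lt_zero.mpr h1)
    exact mul_nonpos_of_nonneg_of_nonpos (hGre t) h2
  exact hL0 (Complex.ext (le_antisymm hle hge) hLim)
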